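/- Let n ≥ 1 and let K = ℚ(X_0,…,X_{n−1},Y_1,…,Y_n,p) be the rational function field in the 2n+1 indicated variables. Define W_n(X,Y,p) := Σ_{w∈S_n} p^{−l(w)} Σ_{J⊆{1,…,n−1}, J⊇ν(w)} W_{n,J}(X,Y). Then W_n(X^{−1},Y^{−1},p^{−1}) = (−1)^n · p^{n(n−1)/2} · W_n(X,Y,p), where on the left every one of the variables X_0,…,X_{n−1},Y_1,…,Y_n,p is replaced by its multiplicative inverse. -/

import Mathlib

/-- The descent set ν(w) ⊆ {1,…,n−1} of a permutation w of {1,…,n}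
(realized as `Equiv.Perm (Fin n)` via 0-indexing: position i corresponds to `⟨i-1,_⟩`). -/
def descents {n : ℕ} (w : Equiv.Perm (Fin n)) : Finset ℕ :=
  (Finset.Icc 1 (n - 1)).filter fun i =>
    ∃ hi : i < n, w ⟨i, hi⟩ < w ⟨i - 1, Nat.lt_of_le_of_lt (Nat.sub_le i 1) hi⟩

/-- The number of inversions l(w) of a permutation. -/
def invCount {n : ℕ} (w : Equiv.Perm (Fin n)) : ℕ :=
  (Finset.univ.filter fun q : Fin n × Fin n => q.1 < q.2 ∧ w q.2 < w q.1).card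

/-- The rational expression `W_{n,I}(X,Y)` over a field, with `Z̲ := Z/(1-Z)`. -/
noncomputable def Wrat {K : Type*} [Field K] (n : ℕ) (I : Finset ℕ) (X Y : ℕ → K) : K :=
  (X 0 / (1 - X 0)) * ∏ i ∈ I, X i / (1 - X i)
  + (Y n / (1 - Y n)) * ∏ i ∈ I, Y i / (1 - Y i)
  + ∑ j ∈ I, (∏ i ∈ I.filter (· ≤ j), Y i / (1 - Y i)) *
      ∏ i ∈ I.filter (fun i => j ≤ i), X i / (1 - X i)
  + ∑ j ∈ insert n I, (∏ i ∈ I.filter (· < j), Y i / (1 - Y i)) *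
      ∏ i ∈ I.filter (fun i => j ≤ i), X i / (1 - X i)

/-- `W_n(X,Y,p) = Σ_{w∈S_n} p^{−l(w)} Σ_{J ⊆ {1,…,n−1}, J ⊇ ν(w)} W_{n,J}(X,Y)`. -/
noncomputable def Wtotal {K : Type*} [Field K] (n : ℕ) (X Y : ℕ → K) (p : K) : K :=
  ∑ w : Equiv.Perm (Fin n),
    p ^ (-(invCount w : ℤ)) *
      ∑ J ∈ (Finset.Icc 1 (n - 1)).powerset.filter (fun J => descents w ⊆ J),
        Wrat n J X Y

/-- The rational function field ℚ(X_0,…,X_{n−1},Y_1,…,Y_n,p) in 2n+1 variables. -/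
abbrev KXYp (n : ℕ) := FractionRing (MvPolynomial (Fin n ⊕ Fin n ⊕ Unit) ℚ)

/-- The variable X_i (0 ≤ i ≤ n−1); junk value 1 outside range. -/
noncomputable def Xvar (n : ℕ) (i : ℕ) : KXYp n :=
  if h : i < n then algebraMap (MvPolynomial (Fin n ⊕ Fin n ⊕ Unit) ℚ) (KXYp n)
    (MvPolynomial.X (Sum.inl ⟨i, h⟩)) else 1

/-- The variable Y_i (1 ≤ i ≤ n); junk value 1 outside range. -/
noncomputable def Yvar (n : ℕ) (i : ℕ) : KXYp n :=
  if h : 1 ≤ i ∧ i ≤ n then algebraMap (MvPolynomial (Fin n ⊕ Fin n ⊕ Unit) ℚ) (KXYp n)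
    (MvPolynomial.X (Sum.inr (Sum.inl ⟨i - 1, by omega⟩))) else 1

/-- The variable p. -/
noncomputable def pvar (n : ℕ) : KXYp n :=
  algebraMap (MvPolynomial (Fin n ⊕ Fin n ⊕ Unit) ℚ) (KXYp n)
    (MvPolynomial.X (Sum.inr (Sum.inr ())))


section AuxFE
variable {K : Type*} [Field K]

noncomputable def Bbar (u : ℕ → K) (J : Finset ℕ) : K := ∏ i ∈ J, u i

noncomputable def Abar (u v : ℕ → K) (vn : K) (J : Finset ℕ) : K :=
  (1 + vn) * ∏ i ∈ J, v i
  + ∑ j ∈ J, (∏ i ∈ J.filter (· < j), v i) * ((1 + v j) * u j) *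
      ∏ i ∈ J.filter (fun i => j < i), u i

lemma Bbar_congr {u u' : ℕ → K} {J : Finset ℕ} (hu : ∀ i ∈ J, u i = u' i) :
    Bbar u J = Bbar u' J := Finset.prod_congr rfl hu

lemma Abar_congr {u u' v v' : ℕ → K} (vn : K) {J : Finset ℕ}
    (hu : ∀ i ∈ J, u i = u' i) (hv : ∀ i ∈ J, v i = v' i) :
    Abar u v vn J = Abar u' v' vn J := by
  rw [Abar, Abar]
  congr 1
  · rw [Finset.prod_congr rfl hv]
  · apply Finset.sum_congr rfl
    intro j hj
    rw [hu j hj, hv j hj,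
      Finset.prod_congr rfl (fun i hi => hv i (Finset.mem_of_mem_filter i hi)),
      Finset.prod_congr rfl (fun i hi => hu i (Finset.mem_of_mem_filter i hi))]

lemma Wrat_eq (n : ℕ) (hn : 1 ≤ n) (J : Finset ℕ) (hJ : J ⊆ Finset.Icc 1 (n-1))
    (X Y : ℕ → K) :
    Wrat n J X Y =
      (X 0 / (1 - X 0)) * Bbar (fun i => X i / (1 - X i)) J
      + Abar (fun i => X i / (1 - X i)) (fun i => Y i / (1 - Y i)) (Y n / (1 - Y n)) J := by
  set u : ℕ → K := fun i => X i / (1 - X i)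
  set v : ℕ → K := fun i => Y i / (1 - Y i)
  have hmem : ∀ i ∈ J, 1 ≤ i ∧ i ≤ n - 1 := by
    intro i hi; exact Finset.mem_Icc.mp (hJ hi)
  have hnJ : n ∉ J := by
    intro h; have := hmem n h; omega
  rw [Wrat, Finset.sum_insert hnJ]
  have h1 : J.filter (· < n) = J := by
    apply Finset.filter_true_of_mem; intro i hi; have := hmem i hi; omega
  have h2 : J.filter (fun i => n ≤ i) = ∅ := by
    apply Finset.filter_false_of_mem; intro i hi; have := hmem i hi; omega
  rw [h1, h2]
  have key : ∀ j ∈ J,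
      (∏ i ∈ J.filter (· ≤ j), v i) * ∏ i ∈ J.filter (fun i => j ≤ i), u i
      + (∏ i ∈ J.filter (· < j), v i) * ∏ i ∈ J.filter (fun i => j ≤ i), u i
      = (∏ i ∈ J.filter (· < j), v i) * ((1 + v j) * u j) *
          ∏ i ∈ J.filter (fun i => j < i), u i := by
    intro j hj
    have e1 : J.filter (· ≤ j) = insert j (J.filter (· < j)) := by
      ext i; simp only [Finset.mem_filter, Finset.mem_insert]
      constructor
      · rintro ⟨hi, hle⟩
        rcases eq_or_lt_of_le hle with h | h
        · exact Or.inl h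
        · exact Or.inr ⟨hi, h⟩
      · rintro (rfl | ⟨hi, hlt⟩)
        · exact ⟨hj, le_refl _⟩
        · exact ⟨hi, le_of_lt hlt⟩
    have e2 : J.filter (fun i => j ≤ i) = insert j (J.filter (fun i => j < i)) := by
      ext i; simp only [Finset.mem_filter, Finset.mem_insert]
      constructor
      · rintro ⟨hi, hle⟩
        rcases eq_or_lt_of_le hle with h | h
        · exact Or.inl h.symm
        · exact Or.inr ⟨hi, h⟩
      · rintro (rfl | ⟨hi, hlt⟩)
        · exact ⟨hj, le_refl _⟩
        · exact ⟨hi, le_of_lt hlt⟩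
    rw [e1, e2, Finset.prod_insert (by simp), Finset.prod_insert (by simp)]
    ring
  have hsum : (∑ j ∈ J, (∏ i ∈ J.filter (· ≤ j), v i) * ∏ i ∈ J.filter (fun i => j ≤ i), u i)
      + ∑ j ∈ J, (∏ i ∈ J.filter (· < j), v i) * ∏ i ∈ J.filter (fun i => j ≤ i), u i
      = ∑ j ∈ J, (∏ i ∈ J.filter (· < j), v i) * ((1 + v j) * u j) *
          ∏ i ∈ J.filter (fun i => j < i), u i := by
    rw [← Finset.sum_add_distrib]
    exact Finset.sum_congr rfl key
  rw [Abar, Bbar]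
  simp only [Finset.prod_empty, mul_one]
  linear_combination hsum

noncomputable def tv (u v : ℕ → K) (d : ℕ → Prop) [DecidablePred d] (vn : K) :
    List ℕ → K × K
  | [] => (1 + vn, 1)
  | k :: l =>
    let pq := tv u v d vn l
    if d k then (v k * pq.1 + (1 + v k) * u k * pq.2, u k * pq.2)
    else ((1 + v k) * pq.1 + (1 + v k) * u k * pq.2, (1 + u k) * pq.2)

lemma Bbar_insert (u : ℕ → K) {k : ℕ} {J : Finset ℕ} (hk : k ∉ J) :
    Bbar u (insert k J) = u k * Bbar u J := Finset.prod_insert hk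

lemma Abar_insert (u v : ℕ → K) (vn : K) {k : ℕ} {J : Finset ℕ}
    (hk : ∀ i ∈ J, k < i) :
    Abar u v vn (insert k J) = v k * Abar u v vn J + (1 + v k) * u k * Bbar u J := by
  have hkJ : k ∉ J := fun h => lt_irrefl k (hk k h)
  rw [Abar, Abar, Bbar, Finset.prod_insert hkJ, Finset.sum_insert hkJ]
  have e1 : (insert k J).filter (· < k) = ∅ := by
    apply Finset.filter_false_of_mem
    intro i hi
    rcases Finset.mem_insert.mp hi with rfl | hi
    · omega
    · have := hk i hi; omega
  have e2 : (insert k J).filter (fun i => k < i) = J := by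
    ext i
    simp only [Finset.mem_filter, Finset.mem_insert]
    constructor
    · rintro ⟨rfl | hi, hlt⟩
      · omega
      · exact hi
    · intro hi; exact ⟨Or.inr hi, hk i hi⟩
  have e3 : ∀ j ∈ J, (insert k J).filter (· < j) = insert k (J.filter (· < j)) := by
    intro j hj; ext i
    simp only [Finset.mem_filter, Finset.mem_insert]
    constructor
    · rintro ⟨rfl | hi, hlt⟩
      · exact Or.inl rfl
      · exact Or.inr ⟨hi, hlt⟩
    · rintro (rfl | ⟨hi, hlt⟩)
      · exact ⟨Or.inl rfl, hk j hj⟩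
      · exact ⟨Or.inr hi, hlt⟩
  have e4 : ∀ j ∈ J, (insert k J).filter (fun i => j < i) = J.filter (fun i => j < i) := by
    intro j hj; ext i
    simp only [Finset.mem_filter, Finset.mem_insert]
    constructor
    · rintro ⟨rfl | hi, hlt⟩
      · have := hk j hj; omega
      · exact ⟨hi, hlt⟩
    · rintro ⟨hi, hlt⟩; exact ⟨Or.inr hi, hlt⟩
  rw [e1, e2]
  have e5 : ∀ j ∈ J,
      (∏ i ∈ (insert k J).filter (· < j), v i) * ((1 + v j) * u j) *
        ∏ i ∈ (insert k J).filter (fun i => j < i), u i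
      = v k * ((∏ i ∈ J.filter (· < j), v i) * ((1 + v j) * u j) *
          ∏ i ∈ J.filter (fun i => j < i), u i) := by
    intro j hj
    rw [e3 j hj, e4 j hj, Finset.prod_insert (by simp [hkJ])]
    ring
  rw [Finset.sum_congr rfl e5, ← Finset.mul_sum]
  simp only [Finset.prod_empty]
  ring

lemma sum_powerset_filter_insert {M : Type*} [AddCommMonoid M] (f : Finset ℕ → M)
    (k : ℕ) (S D : Finset ℕ) (hk : k ∉ S) :
    ∑ J ∈ (insert k S).powerset.filter (fun J => D ∩ insert k S ⊆ J), f J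
      = (if k ∈ D then 0 else ∑ J ∈ S.powerset.filter (fun J => D ∩ S ⊆ J), f J)
        + ∑ J ∈ S.powerset.filter (fun J => D ∩ S ⊆ J), f (insert k J) := by
  classical
  rw [Finset.sum_filter, Finset.sum_powerset_insert hk, Finset.sum_filter, Finset.sum_filter]
  congr 1
  · by_cases hkD : k ∈ D
    · rw [if_pos hkD]
      apply Finset.sum_eq_zero
      intro J hJ
      have hJS : J ⊆ S := Finset.mem_powerset.mp hJ
      rw [if_neg]
      intro hsub
      have : k ∈ J := hsub (Finset.mem_inter.mpr ⟨hkD, Finset.mem_insert_self k S⟩)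
      exact hk (hJS this)
    · rw [if_neg hkD]
      apply Finset.sum_congr rfl
      intro J hJ
      congr 1
      have : D ∩ insert k S = D ∩ S := by
        ext x
        simp only [Finset.mem_inter, Finset.mem_insert]
        constructor
        · rintro ⟨hx, rfl | hx2⟩
          · exact absurd hx hkD
          · exact ⟨hx, hx2⟩
        · rintro ⟨hx, hx2⟩; exact ⟨hx, Or.inr hx2⟩
      rw [this]
  · apply Finset.sum_congr rfl
    intro J hJ
    have hJS : J ⊆ S := Finset.mem_powerset.mp hJ
    congr 1
    have : (D ∩ insert k S ⊆ insert k J) ↔ (D ∩ S ⊆ J) := by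
      constructor
      · intro h x hx
        have hx' := Finset.mem_inter.mp hx
        have : x ∈ insert k J := h (Finset.mem_inter.mpr ⟨hx'.1, Finset.mem_insert_of_mem hx'.2⟩)
        rcases Finset.mem_insert.mp this with rfl | hxJ
        · exact absurd hx'.2 hk
        · exact hxJ
      · intro h x hx
        have hx' := Finset.mem_inter.mp hx
        rcases Finset.mem_insert.mp hx'.2 with rfl | hxS
        · exact Finset.mem_insert_self _ _
        · exact Finset.mem_insert_of_mem (h (Finset.mem_inter.mpr ⟨hx'.1, hxS⟩))
    simp only [this]

lemma sum_powerset_tv (u v : ℕ → K) (D : Finset ℕ) (vn : K) :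
    ∀ l : List ℕ, l.Pairwise (· < ·) →
      (∑ J ∈ l.toFinset.powerset.filter (fun J => D ∩ l.toFinset ⊆ J), Abar u v vn J
         = (tv u v (· ∈ D) vn l).1) ∧
      (∑ J ∈ l.toFinset.powerset.filter (fun J => D ∩ l.toFinset ⊆ J), Bbar u J
         = (tv u v (· ∈ D) vn l).2) := by
  intro l
  induction l with
  | nil =>
    intro _
    simp [tv, Abar, Bbar]
  | cons k l ih =>
    intro hs
    have hs' : l.Pairwise (· < ·) := hs.of_cons
    have hklt : ∀ i ∈ l.toFinset, k < i := by
      intro i hi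
      exact List.rel_of_pairwise_cons hs (List.mem_toFinset.mp hi)
    have hkS : k ∉ l.toFinset := fun h => lt_irrefl k (hklt k h)
    obtain ⟨ihA, ihB⟩ := ih hs'
    have hAins : ∀ J ∈ l.toFinset.powerset.filter (fun J => D ∩ l.toFinset ⊆ J),
        Abar u v vn (insert k J) = v k * Abar u v vn J + (1 + v k) * u k * Bbar u J := by
      intro J hJ
      have hJS : J ⊆ l.toFinset := Finset.mem_powerset.mp (Finset.mem_filter.mp hJ).1
      exact Abar_insert u v vn (fun i hi => hklt i (hJS hi))
    have hBins : ∀ J ∈ l.toFinset.powerset.filter (fun J => D ∩ l.toFinset ⊆ J),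
        Bbar u (insert k J) = u k * Bbar u J := by
      intro J hJ
      have hJS : J ⊆ l.toFinset := Finset.mem_powerset.mp (Finset.mem_filter.mp hJ).1
      exact Bbar_insert u (fun h => hkS (hJS h))
    rw [List.toFinset_cons] at *
    constructor
    · rw [sum_powerset_filter_insert (Abar u v vn) k l.toFinset D hkS,
        Finset.sum_congr rfl hAins, Finset.sum_add_distrib, ← Finset.mul_sum, ← Finset.mul_sum,
        ihA, ihB]
      by_cases hkD : k ∈ D
      · rw [if_pos hkD]
        show _ = (tv u v (· ∈ D) vn (k :: l)).1
        rw [tv]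
        simp only [if_pos hkD]
        ring
      · rw [if_neg hkD]
        show _ = (tv u v (· ∈ D) vn (k :: l)).1
        rw [tv]
        simp only [if_neg hkD]
        ring
    · rw [sum_powerset_filter_insert (Bbar u) k l.toFinset D hkS,
        Finset.sum_congr rfl hBins, ← Finset.mul_sum, ihB]
      by_cases hkD : k ∈ D
      · rw [if_pos hkD]
        show _ = (tv u v (· ∈ D) vn (k :: l)).2
        rw [tv]
        simp only [if_pos hkD]
        ring
      · rw [if_neg hkD]
        show _ = (tv u v (· ∈ D) vn (k :: l)).2
        rw [tv]
        simp only [if_neg hkD]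
        ring

lemma tv_congr (u v : ℕ → K) (d d' : ℕ → Prop) [DecidablePred d] [DecidablePred d']
    (vn : K) (l : List ℕ) (h : ∀ i ∈ l, d i ↔ d' i) :
    tv u v d vn l = tv u v d' vn l := by
  induction l with
  | nil => rfl
  | cons k l ih =>
    rw [tv, tv, ih (fun i hi => h i (List.mem_cons_of_mem k hi))]
    by_cases hk : d k
    · rw [if_pos hk, if_pos ((h k (List.mem_cons_self (a := k) (l := l))).mp hk)]
    · rw [if_neg hk, if_neg (fun h' => hk ((h k (List.mem_cons_self (a := k) (l := l))).mpr h'))]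

lemma tv_inv (u v : ℕ → K) (d : ℕ → Prop) [DecidablePred d] (vn : K) (l : List ℕ) :
    tv (fun i => -1 - u i) (fun i => -1 - v i) d (-1 - vn) l
      = ((-1 : K) ^ (l.length + 1) *
           ((tv u v (fun i => ¬ d i) vn l).1 - (tv u v (fun i => ¬ d i) vn l).2),
         (-1 : K) ^ (l.length + 1) * (-(tv u v (fun i => ¬ d i) vn l).2)) := by
  induction l with
  | nil =>
    rw [tv, tv]
    simp only [List.length_nil, zero_add, pow_one]
    rw [Prod.mk.injEq]
    constructor <;> ring
  | cons k l ih =>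
    rw [tv, tv, ih]
    simp only [List.length_cons]
    by_cases hk : d k
    · rw [if_pos hk, if_neg (fun h => h hk)]
      rw [Prod.mk.injEq]
      constructor <;> · simp only; ring
    · rw [if_neg hk, if_pos hk]
      rw [Prod.mk.injEq]
      constructor <;> · simp only; ring


lemma key_sum (n : ℕ) (hn : 1 ≤ n) (X Y : ℕ → K)
    (hX : ∀ i, i < n → (X i)⁻¹ / (1 - (X i)⁻¹) = -1 - X i / (1 - X i))
    (hY : ∀ i, 1 ≤ i → i ≤ n → (Y i)⁻¹ / (1 - (Y i)⁻¹) = -1 - Y i / (1 - Y i))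
    (D : Finset ℕ) (hD : D ⊆ Finset.Icc 1 (n - 1)) :
    ∑ J ∈ (Finset.Icc 1 (n - 1)).powerset.filter (fun J => D ⊆ J),
        Wrat n J (fun i => (X i)⁻¹) (fun i => (Y i)⁻¹)
    = (-1 : K) ^ n * ∑ J ∈ (Finset.Icc 1 (n - 1)).powerset.filter
        (fun J => Finset.Icc 1 (n - 1) \ D ⊆ J), Wrat n J X Y := by
  classical
  set S := Finset.Icc 1 (n - 1) with hS
  set u : ℕ → K := fun i => X i / (1 - X i) with hu
  set v : ℕ → K := fun i => Y i / (1 - Y i) with hv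
  set vn : K := Y n / (1 - Y n) with hvn
  set L : List ℕ := S.sort (· ≤ ·) with hL
  have hLsort : L.Pairwise (· < ·) := S.sortedLT_sort.pairwise
  have hLS : L.toFinset = S := S.sort_toFinset _
  have hLlen : L.length = n - 1 := by
    rw [hL, Finset.length_sort, hS, Nat.card_Icc]
    omega
  -- LHS rewrite
  have hLmem : ∀ i ∈ S, 1 ≤ i ∧ i < n := by
    intro i hi
    have := Finset.mem_Icc.mp hi
    omega
  have lhs_eq : ∀ J ∈ S.powerset.filter (fun J => D ⊆ J),
      Wrat n J (fun i => (X i)⁻¹) (fun i => (Y i)⁻¹)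
        = (-1 - u 0) * Bbar (fun i => -1 - u i) J
          + Abar (fun i => -1 - u i) (fun i => -1 - v i) (-1 - vn) J := by
    intro J hJ
    have hJS : J ⊆ S := Finset.mem_powerset.mp (Finset.mem_filter.mp hJ).1
    rw [Wrat_eq n hn J hJS]
    have hu' : ∀ i ∈ J, (X i)⁻¹ / (1 - (X i)⁻¹) = -1 - u i := by
      intro i hi
      exact hX i (hLmem i (hJS hi)).2
    have hv' : ∀ i ∈ J, (Y i)⁻¹ / (1 - (Y i)⁻¹) = -1 - v i := by
      intro i hi
      have := hLmem i (hJS hi)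
      exact hY i this.1 (by omega)
    rw [Bbar_congr hu', Abar_congr (vn := (Y n)⁻¹ / (1 - (Y n)⁻¹)) hu' hv',
      hX 0 (by omega), hY n hn (le_refl n)]
  rw [Finset.sum_congr rfl lhs_eq, Finset.sum_add_distrib, ← Finset.mul_sum]
  -- RHS rewrite
  have rhs_eq : ∀ J ∈ S.powerset.filter (fun J => S \ D ⊆ J),
      Wrat n J X Y = (u 0) * Bbar u J + Abar u v vn J := by
    intro J hJ
    have hJS : J ⊆ S := Finset.mem_powerset.mp (Finset.mem_filter.mp hJ).1
    exact Wrat_eq n hn J hJS X Y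
  rw [Finset.sum_congr rfl rhs_eq, Finset.sum_add_distrib, ← Finset.mul_sum]
  -- apply tv machinery
  have hDL : D ∩ L.toFinset = D := by
    rw [hLS]
    exact Finset.inter_eq_left.mpr hD
  have hDL' : (S \ D) ∩ L.toFinset = S \ D := by
    rw [hLS]
    exact Finset.inter_eq_left.mpr (Finset.sdiff_subset)
  obtain ⟨e1, e2⟩ := sum_powerset_tv (fun i => -1 - u i) (fun i => -1 - v i) D (-1 - vn) L hLsort
  obtain ⟨f1, f2⟩ := sum_powerset_tv u v (S \ D) vn L hLsort
  rw [hDL, hLS] at e1 e2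
  rw [hDL', hLS] at f1 f2
  rw [e1, e2, f1, f2]
  have hflip : tv u v (· ∈ S \ D) vn L = tv u v (fun i => ¬ i ∈ D) vn L := by
    apply tv_congr
    intro i hi
    have hiS : i ∈ S := by rw [← hLS]; exact List.mem_toFinset.mpr hi
    simp [Finset.mem_sdiff, hiS]
  rw [hflip, tv_inv u v (· ∈ D) vn L, hLlen]
  have hpow : (-1 : K) ^ (n - 1 + 1) = (-1 : K) ^ n := by
    congr 1
    omega
  simp only [hpow]
  ring


lemma bar_inv {z : K} (h0 : z ≠ 0) (h1 : z ≠ 1) :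
    z⁻¹ / (1 - z⁻¹) = -1 - z / (1 - z) := by
  have hz1 : z - 1 ≠ 0 := sub_ne_zero.mpr h1
  have h1' : (1 : K) - z ≠ 0 := sub_ne_zero.mpr (Ne.symm h1)
  have e1 : 1 - z⁻¹ = (z - 1) / z := by
    rw [eq_div_iff h0]
    field_simp
  rw [e1, div_div_eq_mul_div, inv_mul_cancel₀ h0, div_eq_iff hz1]
  field_simp
  ring


lemma card_lt_pairs (n : ℕ) :
    (Finset.univ.filter fun q : Fin n × Fin n => q.1 < q.2).card = n * (n - 1) / 2 := by
  classical
  rw [Finset.card_eq_sum_card_fiberwise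
    (f := fun q : Fin n × Fin n => q.2) (t := Finset.univ) (fun x _ => Finset.mem_univ _)]
  have hfib : ∀ j : Fin n,
      ((Finset.univ.filter fun q : Fin n × Fin n => q.1 < q.2).filter
        fun q => q.2 = j).card = j.val := by
    intro j
    have e : ((Finset.univ.filter fun q : Fin n × Fin n => q.1 < q.2).filter fun q => q.2 = j)
        = (Finset.Iio j).image (fun i => (i, j)) := by
      ext q
      simp only [Finset.filter_filter, Finset.mem_filter, Finset.mem_univ, true_and,
        Finset.mem_image, Finset.mem_Iio]
      constructor
      · rintro ⟨hlt, h2⟩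
        exact ⟨q.1, h2 ▸ hlt, by rw [← h2]⟩
      · rintro ⟨i, hi, rfl⟩
        exact ⟨hi, rfl⟩
    rw [e, Finset.card_image_of_injective _ (fun a b h => ((Prod.mk.injEq _ _ _ _).mp h).1),
      Fin.card_Iio]
  rw [Finset.sum_congr rfl (fun j _ => hfib j), Fin.sum_univ_eq_sum_range (fun i => i) n]
  exact Finset.sum_range_id n

lemma invCount_add (n : ℕ) (w : Equiv.Perm (Fin n)) :
    invCount w + invCount ((Fin.revPerm : Equiv.Perm (Fin n)) * w) = n * (n - 1) / 2 := by
  classical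
  rw [invCount, invCount, ← card_lt_pairs n]
  have hne : ∀ q : Fin n × Fin n, q.1 < q.2 → w q.2 ≠ w q.1 :=
    fun q h he => absurd (w.injective he) (ne_of_gt h)
  have e1 : (Finset.univ.filter fun q : Fin n × Fin n => q.1 < q.2 ∧ w q.2 < w q.1)
      = (Finset.univ.filter fun q : Fin n × Fin n => q.1 < q.2).filter
          (fun q => w q.2 < w q.1) := by
    rw [Finset.filter_filter]
  have e2 : (Finset.univ.filter fun q : Fin n × Fin n =>
        q.1 < q.2 ∧ ((Fin.revPerm : Equiv.Perm (Fin n)) * w) q.2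
          < ((Fin.revPerm : Equiv.Perm (Fin n)) * w) q.1)
      = (Finset.univ.filter fun q : Fin n × Fin n => q.1 < q.2).filter
          (fun q => ¬ w q.2 < w q.1) := by
    rw [Finset.filter_filter]
    apply Finset.filter_congr
    intro q _
    constructor
    · rintro ⟨h1, h2⟩
      refine ⟨h1, ?_⟩
      have h3 : (w q.2).rev < (w q.1).rev := h2
      have h4 : w q.1 < w q.2 := Fin.rev_lt_rev.mp h3
      exact fun h5 => absurd h4 (lt_asymm h5)
    · rintro ⟨h1, h2⟩
      refine ⟨h1, ?_⟩
      have h4 : w q.1 < w q.2 := lt_of_le_of_ne (not_lt.mp h2) (Ne.symm (hne q h1))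
      exact Fin.rev_lt_rev.mpr h4
  rw [e1, e2, Finset.card_filter_add_card_filter_not]

lemma descents_rev (n : ℕ) (hn : 1 ≤ n) (w : Equiv.Perm (Fin n)) :
    descents ((Fin.revPerm : Equiv.Perm (Fin n)) * w)
      = Finset.Icc 1 (n - 1) \ descents w := by
  ext i
  simp only [descents, Finset.mem_filter, Finset.mem_sdiff, Finset.mem_Icc]
  constructor
  · rintro ⟨⟨h1, h2⟩, hi, hlt⟩
    refine ⟨⟨h1, h2⟩, ?_⟩
    rintro ⟨⟨_, _⟩, hi', hlt'⟩
    have h3 : w ⟨i - 1, Nat.lt_of_le_of_lt (Nat.sub_le i 1) hi⟩ < w ⟨i, hi⟩ :=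
      Fin.rev_lt_rev.mp hlt
    exact absurd hlt' (lt_asymm h3)
  · rintro ⟨⟨h1, h2⟩, hnd⟩
    have hi : i < n := by omega
    refine ⟨⟨h1, h2⟩, hi, ?_⟩
    have hnlt : ¬ w ⟨i, hi⟩ < w ⟨i - 1, Nat.lt_of_le_of_lt (Nat.sub_le i 1) hi⟩ := by
      intro h
      exact hnd ⟨⟨h1, h2⟩, hi, h⟩
    have hne : w ⟨i - 1, Nat.lt_of_le_of_lt (Nat.sub_le i 1) hi⟩ ≠ w ⟨i, hi⟩ := by
      intro he
      have h5 : i - 1 = i := congrArg Fin.val (w.injective he)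
      omega
    have h4 : w ⟨i - 1, Nat.lt_of_le_of_lt (Nat.sub_le i 1) hi⟩ < w ⟨i, hi⟩ :=
      lt_of_le_of_ne (not_lt.mp hnlt) hne
    exact Fin.rev_lt_rev.mpr h4

lemma poly_injective (n : ℕ) : Function.Injective
    (algebraMap (MvPolynomial (Fin n ⊕ Fin n ⊕ Unit) ℚ) (KXYp n)) :=
  IsFractionRing.injective _ _

lemma algX_ne_zero (n : ℕ) (s : Fin n ⊕ Fin n ⊕ Unit) :
    algebraMap (MvPolynomial (Fin n ⊕ Fin n ⊕ Unit) ℚ) (KXYp n) (MvPolynomial.X s) ≠ 0 := by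
  intro h
  exact MvPolynomial.X_ne_zero s (poly_injective n (by rw [h, map_zero]))

lemma algX_ne_one (n : ℕ) (s : Fin n ⊕ Fin n ⊕ Unit) :
    algebraMap (MvPolynomial (Fin n ⊕ Fin n ⊕ Unit) ℚ) (KXYp n) (MvPolynomial.X s) ≠ 1 := by
  intro h
  have h2 : (MvPolynomial.X s : MvPolynomial (Fin n ⊕ Fin n ⊕ Unit) ℚ) = 1 :=
    poly_injective n (by rw [h, map_one])
  have h3 := congrArg MvPolynomial.constantCoeff h2
  rw [MvPolynomial.constantCoeff_X, map_one] at h3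
  exact zero_ne_one h3

lemma Xvar_inv (n : ℕ) (i : ℕ) (hi : i < n) :
    (Xvar n i)⁻¹ / (1 - (Xvar n i)⁻¹) = -1 - Xvar n i / (1 - Xvar n i) := by
  rw [Xvar, dif_pos hi]
  exact bar_inv (algX_ne_zero n _) (algX_ne_one n _)

lemma Yvar_inv (n : ℕ) (i : ℕ) (h1 : 1 ≤ i) (h2 : i ≤ n) :
    (Yvar n i)⁻¹ / (1 - (Yvar n i)⁻¹) = -1 - Yvar n i / (1 - Yvar n i) := by
  rw [Yvar, dif_pos ⟨h1, h2⟩]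
  exact bar_inv (algX_ne_zero n _) (algX_ne_one n _)

lemma pvar_ne_zero (n : ℕ) : pvar n ≠ 0 := algX_ne_zero n _

end AuxFE


theorem Wtotal_functional_equation (n : ℕ) (hn : 1 ≤ n) :
    Wtotal n (fun i => (Xvar n i)⁻¹) (fun i => (Yvar n i)⁻¹) (pvar n)⁻¹ =
      (-1) ^ n * pvar n ^ (n * (n - 1) / 2) * Wtotal n (Xvar n) (Yvar n) (pvar n) := by
  classical
  have hp0 : pvar n ≠ 0 := pvar_ne_zero n
  rw [Wtotal, Wtotal, Finset.mul_sum]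
  conv_rhs => rw [← Equiv.sum_comp (Equiv.mulLeft (Fin.revPerm : Equiv.Perm (Fin n)))]
  refine Finset.sum_congr rfl fun w _ => ?_
  simp only [Equiv.coe_mulLeft]
  rw [key_sum n hn (Xvar n) (Yvar n) (fun i hi => Xvar_inv n i hi)
    (fun i h1 h2 => Yvar_inv n i h1 h2) (descents w) (Finset.filter_subset _ _)]
  simp only [descents_rev n hn w]
  have hz : (pvar n)⁻¹ ^ (-(invCount w : ℤ)) = pvar n ^ ((invCount w : ℤ)) := by
    rw [inv_zpow, ← zpow_neg, neg_neg]
  have hN := invCount_add n w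
  have hz2 : pvar n ^ (n * (n - 1) / 2)
      * pvar n ^ (-(invCount ((Fin.revPerm : Equiv.Perm (Fin n)) * w) : ℤ))
      = pvar n ^ ((invCount w : ℤ)) := by
    rw [← zpow_natCast (pvar n) (n * (n - 1) / 2), ← zpow_add₀ hp0]
    congr 1
    omega
  rw [hz]
  set G := ∑ J ∈ (Finset.Icc 1 (n - 1)).powerset.filter
      (fun J => Finset.Icc 1 (n - 1) \ descents w ⊆ J), Wrat n J (Xvar n) (Yvar n) with hG
  calc pvar n ^ ((invCount w : ℤ)) * ((-1 : KXYp n) ^ n * G)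
      = (-1 : KXYp n) ^ n * ((pvar n ^ (n * (n - 1) / 2)
          * pvar n ^ (-(invCount ((Fin.revPerm : Equiv.Perm (Fin n)) * w) : ℤ))) * G) := by
        rw [hz2]; ring
    _ = (-1) ^ n * pvar n ^ (n * (n - 1) / 2)
          * (pvar n ^ (-(invCount ((Fin.revPerm : Equiv.Perm (Fin n)) * w) : ℤ)) * G) := by
        ring
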